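/- Consider two binary-IV setups: sample a with data (z^a, v^a, u^a, f^a, g^a) on one probability space and sample b with data (z^b, v^b, u^b, f^b, g^b) on another probability space, each satisfying the binary-IV assumptions including monotonicity, with P(z^a = 1), P(z^a = 0), P(z^b = 1), P(z^b = 0) all positive. Let C^a = {f^a(0, v^a) = 0 and f^a(1, v^a) = 1} and C^b = {f^b(0, v^b) = 0 and f^b(1, v^b) = 1}, and assume P(C^a) > 0. Then the two-sample Wald ratio β^{ab} := (E[y^b | z^b = 1] − E[y^b | z^b = 0])/(E[x^a | z^a = 1] − E[x^a | z^a = 0]) satisfies β^{ab} = E[g^b(1, u^b) − g^b(0, u^b)·1 | C^b] · P(C^b)/P(C^a) when P(C^b) > 0, i.e. β^{ab} = E[(g^b(1, u^b) − g^b(0, u^b))·1_{C^b}]/P(C^a). -/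

import Mathlib

open MeasureTheory ProbabilityTheory

noncomputable def cexp {Ωs : Type*} [MeasurableSpace Ωs] (μ : Measure Ωs)
    (Y : Ωs → ℝ) (E : Set Ωs) : ℝ :=
  (∫ ω in E, Y ω ∂μ) / (μ E).toReal

/-- Key: LATE for a single binary-IV sample. -/
lemma wald_key {Ω V U : Type*} [MeasurableSpace Ω] [MeasurableSpace V] [MeasurableSpace U]
    (μ : Measure Ω) [IsProbabilityMeasure μ]
    (z : Ω → Bool) (hz : Measurable z)
    (v : Ω → V) (hv : Measurable v)
    (u : Ω → U) (hu : Measurable u)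
    (f : Bool → V → Bool) (hf : ∀ b, Measurable (f b))
    (g : Bool → U → ℝ) (hg : ∀ b, Measurable (g b))
    (hgint : ∀ b, Integrable (fun ω => g b (u ω)) μ)
    (hindep : IndepFun z (fun ω => (u ω, v ω)) μ)
    (hmono : ∀ w : V, f false w = true → f true w = true)
    (hz1 : 0 < μ {ω | z ω = true}) (hz0 : 0 < μ {ω | z ω = false})
    (y : Ω → ℝ) (hy : y = fun ω => g (f (z ω) (v ω)) (u ω))
    (C : Set Ω) (hC : C = {ω | f false (v ω) = false ∧ f true (v ω) = true}) :
    cexp μ y {ω | z ω = true} - cexp μ y {ω | z ω = false}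
      = ∫ ω in C, (g true (u ω) - g false (u ω)) ∂μ := by
  -- per-arm conditional expectation
  have harm : ∀ b : Bool, cexp μ y {ω | z ω = b} = ∫ ω, g (f b (v ω)) (u ω) ∂μ := by
    intro b
    have hset : MeasurableSet {ω | z ω = b} := hz (measurableSet_singleton b)
    have hbint : Integrable (fun ω => g (f b (v ω)) (u ω)) μ := by
      have hA : MeasurableSet {ω | f b (v ω) = true} :=
        (hf b).comp hv (measurableSet_singleton true)
      have heq : (fun ω => g (f b (v ω)) (u ω)) =
          (Set.indicator {ω | f b (v ω) = true} (fun ω => g true (u ω)) +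
           Set.indicator {ω | f b (v ω) = true}ᶜ (fun ω => g false (u ω))) := by
        funext ω
        by_cases h : f b (v ω) = true <;>
          simp [Set.indicator_apply, h, Bool.not_eq_true] at * <;> simp [h]
      rw [heq]
      exact (((hgint true).indicator hA).add ((hgint false).indicator hA.compl))
    have hψmeas : Measurable (fun p : U × V => g (f b p.2) p.1) := by
      have : (fun p : U × V => g (f b p.2) p.1) =
          fun p => if f b p.2 = true then g true p.1 else g false p.1 := by
        funext p; cases h : f b p.2 <;> simp [h]
      rw [this]
      exact Measurable.ite ((hf b).comp measurable_snd (measurableSet_singleton true))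
        ((hg true).comp measurable_fst) ((hg false).comp measurable_fst)
    have hφmeas : Measurable (fun t : Bool => if t = b then (1:ℝ) else 0) := by
      measurability
    have hindep2 : IndepFun (fun ω => if z ω = b then (1:ℝ) else 0)
        (fun ω => g (f b (v ω)) (u ω)) μ :=
      hindep.comp hφmeas hψmeas
    have hmul := hindep2.integral_mul_eq_mul_integral
      (hφmeas.comp hz).aestronglyMeasurable
      ((hψmeas.comp (hu.prodMk hv)).aestronglyMeasurable)
    have hind : (∫ ω, (if z ω = b then (1:ℝ) else 0) ∂μ) = (μ {ω | z ω = b}).toReal := by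
      have : (fun ω => if z ω = b then (1:ℝ) else 0) =
          Set.indicator {ω | z ω = b} (fun _ => (1:ℝ)) := by
        funext ω; by_cases h : z ω = b <;> simp [Set.indicator_apply, h]
      rw [this, integral_indicator_const (1:ℝ) hset, smul_eq_mul, mul_one, measureReal_def]
    have hset_int : (∫ ω in {ω | z ω = b}, y ω ∂μ)
        = (μ {ω | z ω = b}).toReal * ∫ ω, g (f b (v ω)) (u ω) ∂μ := by
      have h1 : (∫ ω in {ω | z ω = b}, y ω ∂μ)
          = ∫ ω in {ω | z ω = b}, g (f b (v ω)) (u ω) ∂μ := by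
        refine setIntegral_congr_fun hset (fun ω hω => ?_)
        simp only [Set.mem_setOf_eq] at hω
        simp [hy, hω]
      have h2 : (∫ ω in {ω | z ω = b}, g (f b (v ω)) (u ω) ∂μ)
          = ∫ ω, ((fun ω => if z ω = b then (1:ℝ) else 0) * fun ω => g (f b (v ω)) (u ω)) ω ∂μ := by
        rw [← integral_indicator hset]
        congr 1; funext ω
        by_cases h : z ω = b <;> simp [Set.indicator_apply, h]
      rw [h1, h2, hmul, hind]
    have hPpos : (0:ℝ) < (μ {ω | z ω = b}).toReal := by
      cases b
      · exact ENNReal.toReal_pos hz0.ne' (measure_ne_top μ _)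
      · exact ENNReal.toReal_pos hz1.ne' (measure_ne_top μ _)
    rw [cexp, hset_int]
    field_simp
  have hCmeas : MeasurableSet C := by
    rw [hC]
    exact ((hf false).comp hv (measurableSet_singleton false)).inter
      ((hf true).comp hv (measurableSet_singleton true))
  rw [harm true, harm false, ← integral_sub (by
      have hA : MeasurableSet {ω | f true (v ω) = true} :=
        (hf true).comp hv (measurableSet_singleton true)
      have heq : (fun ω => g (f true (v ω)) (u ω)) =
          (Set.indicator {ω | f true (v ω) = true} (fun ω => g true (u ω)) +
           Set.indicator {ω | f true (v ω) = true}ᶜ (fun ω => g false (u ω))) := by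
        funext ω
        by_cases h : f true (v ω) = true <;>
          simp [Set.indicator_apply, h, Bool.not_eq_true] at * <;> simp [h]
      rw [heq]
      exact (((hgint true).indicator hA).add ((hgint false).indicator hA.compl))) (by
      have hA : MeasurableSet {ω | f false (v ω) = true} :=
        (hf false).comp hv (measurableSet_singleton true)
      have heq : (fun ω => g (f false (v ω)) (u ω)) =
          (Set.indicator {ω | f false (v ω) = true} (fun ω => g true (u ω)) +
           Set.indicator {ω | f false (v ω) = true}ᶜ (fun ω => g false (u ω))) := by
        funext ω
        by_cases h : f false (v ω) = true <;>
          simp [Set.indicator_apply, h, Bool.not_eq_true] at * <;> simp [h]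
      rw [heq]
      exact (((hgint true).indicator hA).add ((hgint false).indicator hA.compl)))]
  rw [← integral_indicator hCmeas]
  congr 1
  funext ω
  by_cases h0 : f false (v ω) = true
  · have h1 : f true (v ω) = true := hmono _ h0
    have : ω ∉ C := by simp [hC, h0]
    simp [Set.indicator_apply, this, h0, h1]
  · have h0' : f false (v ω) = false := by simpa using h0
    by_cases h1 : f true (v ω) = true
    · have : ω ∈ C := by simp [hC, h0', h1]
      simp [Set.indicator_apply, this, h0', h1]
    · have h1' : f true (v ω) = false := by simpa using h1
      have : ω ∉ C := by simp [hC, h1']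
      simp [Set.indicator_apply, this, h0', h1']

theorem two_sample_wald_ratio_decomposition
    {Ωa Ωb V U : Type*} [MeasurableSpace Ωa] [MeasurableSpace Ωb]
    [MeasurableSpace V] [MeasurableSpace U]
    -- sample a
    (μa : Measure Ωa) [IsProbabilityMeasure μa]
    (za : Ωa → Bool) (hzameas : Measurable za)
    (va : Ωa → V) (hvameas : Measurable va)
    (ua : Ωa → U) (huameas : Measurable ua)
    (fa : Bool → V → Bool) (hfameas : ∀ b, Measurable (fa b))
    (ga : Bool → U → ℝ) (hgameas : ∀ b, Measurable (ga b))
    (hgaint : ∀ b, Integrable (fun ω => ga b (ua ω)) μa)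
    (hindepa : IndepFun za (fun ω => (ua ω, va ω)) μa)
    (hmonoa : ∀ w : V, fa false w = true → fa true w = true)
    (hza1 : 0 < μa {ω | za ω = true}) (hza0 : 0 < μa {ω | za ω = false})
    (xa : Ωa → ℝ) (hxa : xa = fun ω => if fa (za ω) (va ω) then (1 : ℝ) else 0)
    (Ca : Set Ωa) (hCa : Ca = {ω | fa false (va ω) = false ∧ fa true (va ω) = true})
    (hCapos : 0 < μa Ca)
    -- sample b
    (μb : Measure Ωb) [IsProbabilityMeasure μb]
    (zb : Ωb → Bool) (hzbmeas : Measurable zb)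
    (vb : Ωb → V) (hvbmeas : Measurable vb)
    (ub : Ωb → U) (hubmeas : Measurable ub)
    (fb : Bool → V → Bool) (hfbmeas : ∀ b, Measurable (fb b))
    (gb : Bool → U → ℝ) (hgbmeas : ∀ b, Measurable (gb b))
    (hgbint : ∀ b, Integrable (fun ω => gb b (ub ω)) μb)
    (hindepb : IndepFun zb (fun ω => (ub ω, vb ω)) μb)
    (hmonob : ∀ w : V, fb false w = true → fb true w = true)
    (hzb1 : 0 < μb {ω | zb ω = true}) (hzb0 : 0 < μb {ω | zb ω = false})
    (yb : Ωb → ℝ) (hyb : yb = fun ω => gb (fb (zb ω) (vb ω)) (ub ω))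
    (Cb : Set Ωb) (hCb : Cb = {ω | fb false (vb ω) = false ∧ fb true (vb ω) = true})
    -- two-sample Wald ratio
    (βab : ℝ)
    (hβab : βab = (cexp μb yb {ω | zb ω = true} - cexp μb yb {ω | zb ω = false}) /
      (cexp μa xa {ω | za ω = true} - cexp μa xa {ω | za ω = false})) :
    (0 < μb Cb →
      βab = cexp μb (fun ω => gb true (ub ω) - gb false (ub ω)) Cb *
        ((μb Cb).toReal / (μa Ca).toReal)) ∧
    βab = (∫ ω in Cb, (gb true (ub ω) - gb false (ub ω)) ∂μb) / (μa Ca).toReal := by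
  -- numerator via key lemma
  have hnum := wald_key μb zb hzbmeas vb hvbmeas ub hubmeas fb hfbmeas gb hgbmeas hgbint
    hindepb hmonob hzb1 hzb0 yb hyb Cb hCb
  -- denominator via key lemma with g' b u = if b then 1 else 0
  have hCameas : MeasurableSet Ca := by
    rw [hCa]
    exact ((hfameas false).comp hvameas (measurableSet_singleton false)).inter
      ((hfameas true).comp hvameas (measurableSet_singleton true))
  have hden := wald_key μa za hzameas va hvameas ua huameas fa hfameas
    (fun b _ => if b then (1:ℝ) else 0) (fun b => measurable_const)
    (fun b => integrable_const _) hindepa hmonoa hza1 hza0 xa (by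
      rw [hxa]) Ca hCa
  have hden' : cexp μa xa {ω | za ω = true} - cexp μa xa {ω | za ω = false}
      = (μa Ca).toReal := by
    rw [hden]
    simp [setIntegral_const, measureReal_def]
  have hβ : βab = (∫ ω in Cb, (gb true (ub ω) - gb false (ub ω)) ∂μb) / (μa Ca).toReal := by
    rw [hβab, hnum, hden']
  refine ⟨fun hCbpos => ?_, hβ⟩
  have hPb : (0:ℝ) < (μb Cb).toReal := ENNReal.toReal_pos hCbpos.ne' (measure_ne_top μb _)
  have hPa : (0:ℝ) < (μa Ca).toReal := ENNReal.toReal_pos hCapos.ne' (measure_ne_top μa _)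
  rw [hβ, cexp]
  field_simp
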